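/- arXiv:2411.18397 — 4 statements merged into one kernel-verified Lean document; each statement's English description precedes it below -/
import Mathlib

section
/- Let φ : ℝ → ℝ be differentiable and ϑ-strongly convex for some ϑ > 0, let ε > 0, and let F̆, F̆_b : (0,1) → [0,∞) be measurable with F̆_b square-integrable on (0,1). If ∫₀¹ B_φ(F̆(t), F̆_b(t)) dt ≤ ε, then F̆ is integrable on (0,1) and ∫₀¹ F̆(t) dt ≤ ∫₀¹ F̆_b(t) dt + √(2ε/ϑ). -/
open MeasureTheory

/-- The Bregman divergence with (differentiable) generator `φ`. -/
noncomputable def bregman (φ : ℝ → ℝ) (z₁ z₂ : ℝ) : ℝ :=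
  φ z₁ - φ z₂ - deriv φ z₂ * (z₁ - z₂)

theorem tangent_le (ψ : ℝ → ℝ) (hψ : Differentiable ℝ ψ) (hc : ConvexOn ℝ Set.univ ψ) (x y : ℝ) :
    ψ x + deriv ψ x * (y - x) ≤ ψ y := by
  rcases lt_trichotomy x y with h | h | h
  · have := hc.le_slope_of_hasDerivAt (Set.mem_univ x) (Set.mem_univ y) h (hψ x).hasDerivAt
    rw [slope_def_field] at this
    have h' : 0 < y - x := by linarith
    have := (le_div_iff₀ h').mp this
    linarith
  · simp [h]
  · have := hc.slope_le_of_hasDerivAt (Set.mem_univ y) (Set.mem_univ x) h (hψ x).hasDerivAt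
    rw [slope_def_field] at this
    have h' : 0 < x - y := by linarith
    have := (div_le_iff₀ h').mp this
    nlinarith

theorem bregman_sq_le (φ : ℝ → ℝ) (hφ : Differentiable ℝ φ) (ϑ : ℝ)
    (hconv : ConvexOn ℝ Set.univ (fun x => φ x - ϑ / 2 * x ^ 2)) (z₁ z₂ : ℝ) :
    ϑ / 2 * (z₁ - z₂) ^ 2 ≤ bregman φ z₁ z₂ := by
  set ψ : ℝ → ℝ := fun x => φ x - ϑ / 2 * x ^ 2 with hψdef
  have hψ : Differentiable ℝ ψ := hφ.sub ((differentiable_pow 2).const_mul _)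
  have hderiv : ∀ x, deriv ψ x = deriv φ x - ϑ * x := by
    intro x
    have h1 : HasDerivAt ψ (deriv φ x - ϑ / 2 * (2 * x)) x := by
      exact ((hφ x).hasDerivAt.sub (((hasDerivAt_pow 2 x)).const_mul (ϑ / 2)))
        |>.congr_deriv (by ring)
    rw [h1.deriv]; ring
  have := tangent_le ψ hψ hconv z₂ z₁
  rw [hderiv] at this
  simp only [hψdef] at this
  unfold bregman
  nlinarith [this]

/-- If `φ` is differentiable and `ϑ`-strongly convex, `ε > 0`, `F̆, F̆_b : (0,1) → [0,∞)`
are measurable, `F̆_b` is square-integrable on `(0,1)`, and the Bregman–Wasserstein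
divergence `∫₀¹ B_φ(F̆(t), F̆_b(t)) dt` is at most `ε`, then `F̆` is integrable on `(0,1)`
and `∫₀¹ F̆(t) dt ≤ ∫₀¹ F̆_b(t) dt + √(2ε/ϑ)`. -/
theorem integrable_and_mean_bound_of_bw_le
    (φ : ℝ → ℝ) (hφ : Differentiable ℝ φ) (ϑ : ℝ) (hϑ : 0 < ϑ)
    (hconv : ConvexOn ℝ Set.univ (fun x => φ x - ϑ / 2 * x ^ 2))
    (ε : ℝ) (hε : 0 < ε)
    (F Fb : ℝ → ℝ) (hF : Measurable F) (hFb : Measurable Fb)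
    (hF0 : ∀ t ∈ Set.Ioo (0:ℝ) 1, 0 ≤ F t) (hFb0 : ∀ t ∈ Set.Ioo (0:ℝ) 1, 0 ≤ Fb t)
    (hFbL2 : MemLp Fb 2 (volume.restrict (Set.Ioo (0:ℝ) 1)))
    (hBW : ∫⁻ t in Set.Ioo (0:ℝ) 1, ENNReal.ofReal (bregman φ (F t) (Fb t))
            ≤ ENNReal.ofReal ε) :
    IntegrableOn F (Set.Ioo 0 1) ∧
      ∫ t in Set.Ioo (0:ℝ) 1, F t
        ≤ (∫ t in Set.Ioo (0:ℝ) 1, Fb t) + Real.sqrt (2 * ε / ϑ) := by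
  set μ := volume.restrict (Set.Ioo (0:ℝ) 1) with hμ
  have hμuniv : μ Set.univ = 1 := by
    rw [hμ, Measure.restrict_apply_univ, Real.volume_Ioo]
    norm_num
  haveI : IsFiniteMeasure μ := ⟨by rw [hμuniv]; exact ENNReal.one_lt_top⟩
  set g : ℝ → ℝ := fun t => F t - Fb t with hg
  have hgmeas : Measurable g := hF.sub hFb
  -- lintegral bound on g²
  have key : ∫⁻ t, ENNReal.ofReal ((g t) ^ 2) ∂μ ≤ ENNReal.ofReal (2 * ε / ϑ) := by
    have h2 : ∫⁻ t, ENNReal.ofReal (ϑ / 2 * (g t) ^ 2) ∂μ ≤ ENNReal.ofReal ε :=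
      le_trans (lintegral_mono fun t =>
        ENNReal.ofReal_le_ofReal (bregman_sq_le φ hφ ϑ hconv (F t) (Fb t))) hBW
    have h3 : ∀ t, ENNReal.ofReal (ϑ / 2 * (g t) ^ 2)
        = ENNReal.ofReal (ϑ / 2) * ENNReal.ofReal ((g t) ^ 2) := fun t =>
      ENNReal.ofReal_mul (by positivity)
    simp only [h3] at h2
    rw [lintegral_const_mul' _ _ ENNReal.ofReal_ne_top] at h2
    have hc0 : ENNReal.ofReal (ϑ / 2) ≠ 0 := by
      simp [ENNReal.ofReal_eq_zero, not_le]; positivity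
    have hX : ∫⁻ t, ENNReal.ofReal ((g t) ^ 2) ∂μ
        ≤ ENNReal.ofReal ε / ENNReal.ofReal (ϑ / 2) :=
      (ENNReal.le_div_iff_mul_le (Or.inl hc0) (Or.inl ENNReal.ofReal_ne_top)).mpr
        (by rwa [mul_comm])
    rwa [← ENNReal.ofReal_div_of_pos (by positivity),
      show ε / (ϑ / 2) = 2 * ε / ϑ by field_simp] at hX
  have hgsq_nn : (0:ℝ → ℝ) ≤ᵐ[μ] fun t => (g t) ^ 2 :=
    Filter.Eventually.of_forall fun t => sq_nonneg _
  have hg2int : Integrable (fun t => (g t) ^ 2) μ := by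
    refine ⟨(hgmeas.pow_const 2).aestronglyMeasurable, ?_⟩
    rw [hasFiniteIntegral_iff_ofReal hgsq_nn]
    exact lt_of_le_of_lt key ENNReal.ofReal_lt_top
  have hgL2 : MemLp g 2 μ :=
    (memLp_two_iff_integrable_sq hgmeas.aestronglyMeasurable).mpr hg2int
  have hFL2 : MemLp F 2 μ := by
    have h := hgL2.add hFbL2
    have : F = (fun t => F t - Fb t) + Fb := by ext t; simp
    rwa [← this] at h
  have hFint : Integrable F μ := hFL2.integrable one_le_two
  have hFbint : Integrable Fb μ := hFbL2.integrable one_le_two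
  refine ⟨hFint, ?_⟩
  have hgint : Integrable g μ := hFint.sub hFbint
  -- real integral bound on g²
  have hint_sq : ∫ t, (g t) ^ 2 ∂μ ≤ 2 * ε / ϑ := by
    rw [← ENNReal.ofReal_le_ofReal_iff (by positivity),
      ofReal_integral_eq_lintegral_ofReal hg2int hgsq_nn]
    exact key
  -- Cauchy–Schwarz
  have hconj : Real.HolderConjugate 2 2 := Real.HolderConjugate.two_two
  have habs : MemLp (fun t => |g t|) (ENNReal.ofReal 2) μ := by
    rw [show ENNReal.ofReal 2 = 2 by simp]
    simpa [Real.norm_eq_abs] using hgL2.norm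
  have hone : MemLp (fun _ : ℝ => (1:ℝ)) (ENNReal.ofReal 2) μ := memLp_const 1
  have hCS := integral_mul_le_Lp_mul_Lq_of_nonneg hconj
    (Filter.Eventually.of_forall fun t => abs_nonneg (g t))
    (Filter.Eventually.of_forall fun _ => zero_le_one) habs hone
  simp only [mul_one] at hCS
  have e1 : ∫ t, |g t| ^ (2:ℝ) ∂μ = ∫ t, (g t) ^ 2 ∂μ := by
    refine integral_congr_ae (Filter.Eventually.of_forall fun t => ?_)
    show |g t| ^ (2:ℝ) = g t ^ 2
    rw [Real.rpow_two, sq_abs]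
  have e2 : ∫ t, (1:ℝ) ^ (2:ℝ) ∂μ = 1 := by
    simp [integral_const, Measure.real, hμuniv]
  rw [e1, e2, Real.one_rpow, mul_one, ← Real.sqrt_eq_rpow] at hCS
  have habs_le : Real.sqrt (∫ t, (g t) ^ 2 ∂μ) ≤ Real.sqrt (2 * ε / ϑ) :=
    Real.sqrt_le_sqrt hint_sq
  have hmono : ∫ t, g t ∂μ ≤ ∫ t, |g t| ∂μ :=
    integral_mono hgint hgint.abs fun t => le_abs_self _
  have hsplit : ∫ t, g t ∂μ = (∫ t, F t ∂μ) - ∫ t, Fb t ∂μ := integral_sub hFint hFbint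
  linarith
end

section
/- Let φ : [0,∞) → ℝ be strictly convex with continuous derivative φ', let 0 ≤ m ≤ M, and let ε > 0. Then there exists a constant C ≥ 0 (depending only on φ, m, M, ε) such that for every measurable F̆ : (0,1) → [0,∞) and every measurable F̆_b : (0,1) → [m, M] with ∫₀¹ B_φ(F̆(t), F̆_b(t)) dt ≤ ε, one has ∫₀¹ F̆(t) dt ≤ C. -/
/-- The Bregman divergence with generator `φ` whose derivative (on `[0,∞)`) is `φ'`. -/
noncomputable def bregmanD (φ φ' : ℝ → ℝ) (z₁ z₂ : ℝ) : ℝ :=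
  φ z₁ - φ z₂ - φ' z₂ * (z₁ - z₂)

/-- If `φ : [0,∞) → ℝ` is strictly convex with continuous derivative `φ'`, `0 ≤ m ≤ M`
and `ε > 0`, then there is a constant `C ≥ 0` such that for every measurable
`F̆ : (0,1) → [0,∞)` and measurable `F̆_b : (0,1) → [m,M]` with Bregman–Wasserstein
divergence `∫₀¹ B_φ(F̆(t), F̆_b(t)) dt ≤ ε`, one has `∫₀¹ F̆(t) dt ≤ C`. -/
theorem lintegral_bounded_of_bw_le
    (φ φ' : ℝ → ℝ) (hconv : StrictConvexOn ℝ (Set.Ici 0) φ)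
    (hderiv : ∀ x ∈ Set.Ici (0:ℝ), HasDerivWithinAt φ (φ' x) (Set.Ici 0) x)
    (hcont : ContinuousOn φ' (Set.Ici 0))
    (m M : ℝ) (hm : 0 ≤ m) (hmM : m ≤ M) (ε : ℝ) (hε : 0 < ε) :
    ∃ C ≥ (0:ℝ), ∀ F Fb : ℝ → ℝ, Measurable F → Measurable Fb →
      (∀ t ∈ Set.Ioo (0:ℝ) 1, 0 ≤ F t) → (∀ t ∈ Set.Ioo (0:ℝ) 1, Fb t ∈ Set.Icc m M) →
      (∫⁻ t in Set.Ioo (0:ℝ) 1, ENNReal.ofReal (bregmanD φ φ' (F t) (Fb t))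
        ≤ ENNReal.ofReal ε) →
      ∫⁻ t in Set.Ioo (0:ℝ) 1, ENNReal.ofReal (F t) ≤ ENNReal.ofReal C := by
  -- gradient inequality for convex functions
  have grad : ∀ x ∈ Set.Ici (0:ℝ), ∀ y ∈ Set.Ici (0:ℝ),
      φ x + φ' x * (y - x) ≤ φ y := by
    intro x hx y hy
    rcases lt_trichotomy x y with h | rfl | h
    · have hs := hconv.convexOn.le_slope_of_hasDerivWithinAt hx hy h (hderiv x hx)
      rw [slope_def_field] at hs
      have hpos : (0:ℝ) < y - x := by linarith
      have := (le_div_iff₀ hpos).mp hs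
      linarith
    · simp
    · have hs := hconv.convexOn.slope_le_of_hasDerivWithinAt hy hx h (hderiv x hx)
      rw [slope_def_field] at hs
      have hpos : (0:ℝ) < x - y := by linarith
      have := (div_le_iff₀ hpos).mp hs
      linarith
  set K : ℝ := M + 1 with hKdef
  have hMmem : M ∈ Set.Ici (0:ℝ) := le_trans hm hmM
  have hKmem : K ∈ Set.Ici (0:ℝ) := by simp [hKdef]; linarith [hMmem.out]
  have hMK : M < K := by simp [hKdef]
  set c : ℝ := φ' K - φ' M with hcdef
  have hc : 0 < c := by
    have h1 : φ' M < slope φ M K :=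
      hconv.lt_slope_of_hasDerivWithinAt hMmem hKmem hMK (hderiv M hMmem)
    have h2 : slope φ M K ≤ φ' K :=
      hconv.convexOn.slope_le_of_hasDerivWithinAt hMmem hKmem hMK (hderiv K hKmem)
    simp only [hcdef]; linarith
  -- derivative bound on [m, M]
  have hderM : ∀ z ∈ Set.Icc m M, φ' z ≤ φ' M := by
    intro z hz
    rcases eq_or_lt_of_le hz.2 with rfl | hzM
    · exact le_rfl
    · have hzmem : z ∈ Set.Ici (0:ℝ) := le_trans hm hz.1
      have h1 : φ' z ≤ slope φ z M :=
        hconv.convexOn.le_slope_of_hasDerivWithinAt hzmem hMmem hzM (hderiv z hzmem)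
      have h2 : slope φ z M ≤ φ' M :=
        hconv.convexOn.slope_le_of_hasDerivWithinAt hzmem hMmem hzM (hderiv M hMmem)
      linarith
  -- key pointwise estimate
  have key : ∀ z₁ ∈ Set.Ici (0:ℝ), ∀ z₂ ∈ Set.Icc m M,
      c * (z₁ - K) ≤ bregmanD φ φ' z₁ z₂ := by
    intro z₁ hz₁ z₂ hz₂
    have hz₂mem : z₂ ∈ Set.Ici (0:ℝ) := le_trans hm hz₂.1
    have hB0 : 0 ≤ bregmanD φ φ' z₁ z₂ := by
      have := grad z₂ hz₂mem z₁ hz₁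
      unfold bregmanD; linarith
    rcases le_or_gt z₁ K with h | h
    · nlinarith
    · have g1 := grad K hKmem z₁ hz₁
      have g2 := grad z₂ hz₂mem K hKmem
      have hφ'z₂ := hderM z₂ hz₂
      unfold bregmanD
      nlinarith [mul_le_mul_of_nonneg_right (sub_le_sub_left hφ'z₂ (φ' K))
        (by linarith : (0:ℝ) ≤ z₁ - K)]
  have hK0 : (0:ℝ) ≤ K := Set.mem_Ici.mp hKmem
  have hεc : (0:ℝ) ≤ ε / c := (div_pos hε hc).le
  refine ⟨K + ε / c, by linarith, ?_⟩
  intro F Fb hF hFb hFpos hFbmem hint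
  have pointwise : ∀ t ∈ Set.Ioo (0:ℝ) 1, ENNReal.ofReal (F t) ≤
      ENNReal.ofReal K + (ENNReal.ofReal c)⁻¹ *
        ENNReal.ofReal (bregmanD φ φ' (F t) (Fb t)) := by
    intro t ht
    rcases le_or_gt (F t) K with hle | hgt
    · exact le_trans (ENNReal.ofReal_le_ofReal hle) le_self_add
    · have hB := key (F t) (hFpos t ht) (Fb t) (hFbmem t ht)
      have hdiv : F t - K ≤ bregmanD φ φ' (F t) (Fb t) / c :=
        (le_div_iff₀ hc).mpr (by linarith [hB, mul_comm c (F t - K)])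
      calc ENNReal.ofReal (F t) = ENNReal.ofReal (K + (F t - K)) := by ring_nf
        _ = ENNReal.ofReal K + ENNReal.ofReal (F t - K) :=
            ENNReal.ofReal_add (le_trans hm (le_trans hmM (by linarith))) (by linarith)
        _ ≤ ENNReal.ofReal K +
              ENNReal.ofReal (bregmanD φ φ' (F t) (Fb t) / c) := by
            exact add_le_add_right (ENNReal.ofReal_le_ofReal hdiv) _
        _ = ENNReal.ofReal K + (ENNReal.ofReal c)⁻¹ *
              ENNReal.ofReal (bregmanD φ φ' (F t) (Fb t)) := by
            rw [ENNReal.ofReal_div_of_pos hc, div_eq_mul_inv, mul_comm]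
  have hmono : ∫⁻ t in Set.Ioo (0:ℝ) 1, ENNReal.ofReal (F t) ≤
      ∫⁻ t in Set.Ioo (0:ℝ) 1, (ENNReal.ofReal K + (ENNReal.ofReal c)⁻¹ *
        ENNReal.ofReal (bregmanD φ φ' (F t) (Fb t))) :=
    MeasureTheory.lintegral_mono_ae
      ((MeasureTheory.ae_restrict_iff' measurableSet_Ioo).mpr (.of_forall pointwise))
  refine hmono.trans ?_
  rw [MeasureTheory.lintegral_add_left measurable_const,
    MeasureTheory.lintegral_const_mul' _ _ (ENNReal.inv_ne_top.mpr (ENNReal.ofReal_pos.mpr hc).ne'),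
    MeasureTheory.setLIntegral_const]
  have hvol : MeasureTheory.volume (Set.Ioo (0:ℝ) 1) = 1 := by
    rw [Real.volume_Ioo]; norm_num
  rw [hvol, mul_one]
  have h2 : (ENNReal.ofReal c)⁻¹ *
      (∫⁻ t in Set.Ioo (0:ℝ) 1, ENNReal.ofReal (bregmanD φ φ' (F t) (Fb t)))
      ≤ (ENNReal.ofReal c)⁻¹ * ENNReal.ofReal ε := mul_le_mul_right hint _
  refine le_trans (add_le_add_right h2 _) (le_of_eq ?_)
  have hre : (ENNReal.ofReal c)⁻¹ * ENNReal.ofReal ε = ENNReal.ofReal (ε / c) := by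
    rw [ENNReal.ofReal_div_of_pos hc, div_eq_mul_inv, mul_comm]
  rw [hre, ← ENNReal.ofReal_add hK0 hεc]
end

section
/- Let m' : (0,∞) → ℝ be continuous and strictly increasing, let λ, μ ≥ 0, let A : (0,1) → ℝ be continuous and non-increasing, and let b : (0,1) → ℝ be left-continuous and non-decreasing. For t ∈ (0,1) define G(t) := inf{ y > 0 : m'(y) + λ A(t) − μ b(t) ≥ 0 } ∈ (0,∞], with inf ∅ := ∞. Then G is left-continuous at every point t ∈ (0,1) where G(t) < ∞: for every non-decreasing sequence tₙ ↑ t one has G(tₙ) → G(t). -/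
/-- The candidate optimal quantile function
`G(t) = inf{ y > 0 : m'(y) + λ A(t) − μ b(t) ≥ 0 } ∈ (0,∞]`, with `inf ∅ = ∞`
(realised via `sInf` in `ℝ≥0∞`, where `sInf ∅ = ⊤`). -/
noncomputable def Gcand (m' A b : ℝ → ℝ) (lam mu : ℝ) (t : ℝ) : ENNReal :=
  sInf (ENNReal.ofReal '' {y : ℝ | 0 < y ∧ 0 ≤ m' y + lam * A t - mu * b t})

/-- If `m' : (0,∞) → ℝ` is continuous and strictly increasing, `λ, μ ≥ 0`,
`A : (0,1) → ℝ` is continuous and non-increasing, and `b : (0,1) → ℝ` is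
left-continuous and non-decreasing, then `G` is left-continuous at every
`t ∈ (0,1)` with `G(t) < ∞`: for every non-decreasing sequence `tₙ ↑ t` in `(0,1)`,
`G(tₙ) → G(t)`. -/
theorem Gcand_left_continuous
    (m' : ℝ → ℝ) (hmc : ContinuousOn m' (Set.Ioi 0)) (hm : StrictMonoOn m' (Set.Ioi 0))
    (lam mu : ℝ) (hlam : 0 ≤ lam) (hmu : 0 ≤ mu)
    (A b : ℝ → ℝ)
    (hAc : ContinuousOn A (Set.Ioo 0 1)) (hA : AntitoneOn A (Set.Ioo 0 1))
    (hbl : ∀ t ∈ Set.Ioo (0:ℝ) 1, ContinuousWithinAt b (Set.Iic t) t)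
    (hb : MonotoneOn b (Set.Ioo 0 1)) :
    ∀ t ∈ Set.Ioo (0:ℝ) 1, Gcand m' A b lam mu t ≠ ⊤ →
      ∀ s : ℕ → ℝ, Monotone s → (∀ n, s n ∈ Set.Ioo (0:ℝ) 1) →
        Filter.Tendsto s Filter.atTop (nhds t) →
        Filter.Tendsto (fun n => Gcand m' A b lam mu (s n)) Filter.atTop
          (nhds (Gcand m' A b lam mu t)) := by
  intro t ht hGt s hs hsmem hst
  have hsle : ∀ n, s n ≤ t := fun n => hs.ge_of_tendsto hst n
  -- upper bound: G (s n) ≤ G t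
  have hub : ∀ n, Gcand m' A b lam mu (s n) ≤ Gcand m' A b lam mu t := by
    intro n
    apply sInf_le_sInf
    apply Set.image_mono
    rintro y ⟨hy0, hy⟩
    refine ⟨hy0, ?_⟩
    have hA' : A t ≤ A (s n) := hA (hsmem n) ht (hsle n)
    have hb' : b (s n) ≤ b t := hb (hsmem n) ht (hsle n)
    have h1 : lam * A t ≤ lam * A (s n) := mul_le_mul_of_nonneg_left hA' hlam
    have h2 : mu * b (s n) ≤ mu * b t := mul_le_mul_of_nonneg_left hb' hmu
    linarith
  -- convergence of the coefficients along the sequence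
  have hsA : Filter.Tendsto (fun n => A (s n)) Filter.atTop (nhds (A t)) := by
    have h1 : Filter.Tendsto s Filter.atTop (nhdsWithin t (Set.Ioo 0 1)) :=
      tendsto_nhdsWithin_of_tendsto_nhds_of_eventually_within s hst
        (Filter.Eventually.of_forall hsmem)
    exact (hAc t ht).tendsto.comp h1
  have hsb : Filter.Tendsto (fun n => b (s n)) Filter.atTop (nhds (b t)) := by
    have h1 : Filter.Tendsto s Filter.atTop (nhdsWithin t (Set.Iic t)) :=
      tendsto_nhdsWithin_of_tendsto_nhds_of_eventually_within s hst
        (Filter.Eventually.of_forall fun n => hsle n)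
    exact (hbl t ht).tendsto.comp h1
  rw [tendsto_order]
  constructor
  · intro a ha
    obtain ⟨r, har, hrG⟩ := exists_between ha
    have hrtop : r ≠ ⊤ := (hrG.trans (lt_top_iff_ne_top.2 hGt)).ne
    have hr0 : r ≠ 0 := ((zero_le : 0 ≤ a).trans_lt har).ne'
    set y := r.toReal with hy
    have hy0 : 0 < y := ENNReal.toReal_pos hr0 hrtop
    have hyr : ENNReal.ofReal y = r := ENNReal.ofReal_toReal hrtop
    have hynot : m' y + lam * A t - mu * b t < 0 := by
      by_contra h
      push_neg at h
      have hmem : ENNReal.ofReal y ∈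
          ENNReal.ofReal '' {z : ℝ | 0 < z ∧ 0 ≤ m' z + lam * A t - mu * b t} :=
        ⟨y, ⟨hy0, h⟩, rfl⟩
      have : Gcand m' A b lam mu t ≤ ENNReal.ofReal y := sInf_le hmem
      rw [hyr] at this
      exact absurd hrG (not_lt.2 this)
    have hc : Filter.Tendsto (fun n => m' y + lam * A (s n) - mu * b (s n))
        Filter.atTop (nhds (m' y + lam * A t - mu * b t)) := by
      exact ((tendsto_const_nhds.add ((hsA.const_mul lam))).sub (hsb.const_mul mu))
    have hev : ∀ᶠ n in Filter.atTop, m' y + lam * A (s n) - mu * b (s n) < 0 :=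
      hc.eventually_lt_const hynot
    filter_upwards [hev] with n hn
    have hyle : ENNReal.ofReal y ≤ Gcand m' A b lam mu (s n) := by
      apply le_sInf
      rintro _ ⟨z, ⟨hz0, hz⟩, rfl⟩
      apply ENNReal.ofReal_le_ofReal
      by_contra hlt
      push_neg at hlt
      have := hm (Set.mem_Ioi.2 hz0) (Set.mem_Ioi.2 hy0) hlt
      linarith
    calc a < r := har
    _ = ENNReal.ofReal y := hyr.symm
    _ ≤ _ := hyle
  · intro a ha
    filter_upwards with n
    exact (hub n).trans_lt ha
end

section
/- Let φ : [0,∞) → ℝ be convex and differentiable, let u : [0,∞) → ℝ be strictly increasing, let A : (0,1) → (0,∞) be integrable with ∫₀¹ A(t) dt > 0, let ε > 0, x₀ > 0, c₀ > 0, and let F̆, F̆_b : (0,1) → [0,∞) be measurable. Assume: t ↦ φ'(F̆(t)), t ↦ φ'(F̆(t)+c₀), and t ↦ φ'(F̆_b(t)) are integrable on (0,1); t ↦ u(F̆(t)+c) is integrable for every c ∈ [0,c₀]; ∫₀¹ B_φ(F̆(t), F̆_b(t)) dt < ε; and ∫₀¹ F̆(t) A(t) dt < x₀. Then there exists c̃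 ∈ (0, c₀] such that ∫₀¹ B_φ(F̆(t)+c̃, F̆_b(t)) dt ≤ ε, ∫₀¹ (F̆(t)+c̃) A(t) dt ≤ x₀, and ∫₀¹ u(F̆(t)+c̃) dt > ∫₀¹ u(F̆(t)) dt. Consequently, at an optimum of the expected-utility problem with budget and Bregman–Wasserstein constraints, at least one of the two constraints must be binding. -/
open MeasureTheory

lemma subgrad_ineq {φ φ' : ℝ → ℝ} (hφconv : ConvexOn ℝ (Set.Ici 0) φ)
    (hφderiv : ∀ x ∈ Set.Ici (0:ℝ), HasDerivWithinAt φ (φ' x) (Set.Ici 0) x)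
    {a b : ℝ} (ha : 0 ≤ a) (hb : 0 ≤ b) :
    φ' a * (b - a) ≤ φ b - φ a := by
  rcases lt_trichotomy a b with h | h | h
  · have hs := hφconv.le_slope_of_hasDerivWithinAt ha hb h (hφderiv a ha)
    rw [slope_def_field, le_div_iff₀ (by linarith)] at hs
    linarith
  · simp [h]
  · have hs := hφconv.slope_le_of_hasDerivWithinAt hb ha h (hφderiv a ha)
    rw [slope_def_field, div_le_iff₀ (by linarith)] at hs
    have : φ' a * (b - a) = -(φ' a * (a - b)) := by ring
    linarith

lemma shift_upper {φ φ' : ℝ → ℝ} (hφconv : ConvexOn ℝ (Set.Ici 0) φ)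
    (hφderiv : ∀ x ∈ Set.Ici (0:ℝ), HasDerivWithinAt φ (φ' x) (Set.Ici 0) x)
    {z c c₀ : ℝ} (hz : 0 ≤ z) (hc : 0 < c) (hcc : c ≤ c₀) :
    φ (z + c) - φ z ≤ c * φ' (z + c₀) := by
  have hc₀ : 0 < c₀ := hc.trans_le hcc
  have m1 : z + c ∈ Set.Ici 0 \ {z} := by
    constructor
    · show (0:ℝ) ≤ z + c; linarith
    · simp only [Set.mem_singleton_iff]; intro hh; linarith [hh]
  have m2 : z + c₀ ∈ Set.Ici 0 \ {z} := by
    constructor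
    · show (0:ℝ) ≤ z + c₀; linarith
    · simp only [Set.mem_singleton_iff]; intro hh; linarith [hh]
  have h1 : slope φ z (z + c) ≤ slope φ z (z + c₀) :=
    hφconv.slope_mono hz m1 m2 (by linarith)
  have h2 : slope φ z (z + c₀) ≤ φ' (z + c₀) :=
    hφconv.slope_le_of_hasDerivWithinAt hz (show (0:ℝ) ≤ z + c₀ by linarith)
      (by linarith) (hφderiv _ (show (0:ℝ) ≤ z + c₀ by linarith))
  have h3 : (φ (z + c) - φ z) / (z + c - z) ≤ φ' (z + c₀) := by
    rw [← slope_def_field]; exact h1.trans h2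
  rw [show z + c - z = c by ring, div_le_iff₀ hc] at h3
  rw [mul_comm]; linarith

lemma aux_mul {d k c : ℝ} (hd : 0 < d) (hk : 0 ≤ k)
    (hc : c ≤ d / (k + 1)) : c * k ≤ d := by
  have h1 : c * k ≤ (d / (k + 1)) * k := mul_le_mul_of_nonneg_right hc hk
  have h2 : (d / (k + 1)) * k ≤ d := by
    rw [div_mul_eq_mul_div, div_le_iff₀ (by linarith)]
    nlinarith
  linarith

/-- If the Bregman–Wasserstein constraint and the budget constraint are both slack at `F̆`,
then shifting `F̆` up by a small constant `c̃ ∈ (0, c₀]` keeps both constraints satisfied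
while strictly increasing expected utility.  Consequently, at an optimum at least one of
the two constraints must be binding. -/
theorem exists_shift_improving
    (φ φ' u : ℝ → ℝ)
    (hφconv : ConvexOn ℝ (Set.Ici 0) φ)
    (hφderiv : ∀ x ∈ Set.Ici (0:ℝ), HasDerivWithinAt φ (φ' x) (Set.Ici 0) x)
    (hu : StrictMonoOn u (Set.Ici 0))
    (A : ℝ → ℝ) (hAint : IntegrableOn A (Set.Ioo 0 1))
    (hApos : ∀ t ∈ Set.Ioo (0:ℝ) 1, 0 < A t)
    (hAI : 0 < ∫ t in Set.Ioo (0:ℝ) 1, A t)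
    (ε x₀ c₀ : ℝ) (hε : 0 < ε) (hx₀ : 0 < x₀) (hc₀ : 0 < c₀)
    (F Fb : ℝ → ℝ) (hF : Measurable F) (hFb : Measurable Fb)
    (hF0 : ∀ t ∈ Set.Ioo (0:ℝ) 1, 0 ≤ F t) (hFb0 : ∀ t ∈ Set.Ioo (0:ℝ) 1, 0 ≤ Fb t)
    (hint1 : IntegrableOn (fun t => φ' (F t)) (Set.Ioo 0 1))
    (hint2 : IntegrableOn (fun t => φ' (F t + c₀)) (Set.Ioo 0 1))
    (hint3 : IntegrableOn (fun t => φ' (Fb t)) (Set.Ioo 0 1))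
    (hintu : ∀ c ∈ Set.Icc (0:ℝ) c₀, IntegrableOn (fun t => u (F t + c)) (Set.Ioo 0 1))
    (hBW : ∫⁻ t in Set.Ioo (0:ℝ) 1, ENNReal.ofReal (bregmanD φ φ' (F t) (Fb t))
            < ENNReal.ofReal ε)
    (hcost : ∫⁻ t in Set.Ioo (0:ℝ) 1, ENNReal.ofReal (F t * A t) < ENNReal.ofReal x₀) :
    ∃ c ∈ Set.Ioc (0:ℝ) c₀,
      (∫⁻ t in Set.Ioo (0:ℝ) 1, ENNReal.ofReal (bregmanD φ φ' (F t + c) (Fb t))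
          ≤ ENNReal.ofReal ε) ∧
      (∫⁻ t in Set.Ioo (0:ℝ) 1, ENNReal.ofReal ((F t + c) * A t) ≤ ENNReal.ofReal x₀) ∧
      (∫ t in Set.Ioo (0:ℝ) 1, u (F t)) < ∫ t in Set.Ioo (0:ℝ) 1, u (F t + c) := by
  have hIm : MeasurableSet (Set.Ioo (0:ℝ) 1) := measurableSet_Ioo
  set G : ℝ → ℝ := fun t => |φ' (F t + c₀)| + |φ' (Fb t)| with hGdef
  have hG : IntegrableOn G (Set.Ioo 0 1) := hint2.abs.add hint3.abs
  have hG0 : ∀ t, 0 ≤ G t := fun t => add_nonneg (abs_nonneg _) (abs_nonneg _)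
  set K : ℝ := ∫ t in Set.Ioo (0:ℝ) 1, G t with hKdef
  have hK0 : 0 ≤ K := setIntegral_nonneg hIm fun t _ => hG0 t
  set J : ℝ := ∫ t in Set.Ioo (0:ℝ) 1, A t with hJdef
  set S := ∫⁻ t in Set.Ioo (0:ℝ) 1, ENNReal.ofReal (bregmanD φ φ' (F t) (Fb t)) with hSdef
  set C := ∫⁻ t in Set.Ioo (0:ℝ) 1, ENNReal.ofReal (F t * A t) with hCdef
  have hS_ne : S ≠ ⊤ := ne_top_of_lt hBW
  have hC_ne : C ≠ ⊤ := ne_top_of_lt hcost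
  have hSr : S.toReal < ε := by
    rw [← ENNReal.ofReal_lt_ofReal_iff_of_nonneg ENNReal.toReal_nonneg,
      ENNReal.ofReal_toReal hS_ne]; exact hBW
  have hCr : C.toReal < x₀ := by
    rw [← ENNReal.ofReal_lt_ofReal_iff_of_nonneg ENNReal.toReal_nonneg,
      ENNReal.ofReal_toReal hC_ne]; exact hcost
  set δ₁ : ℝ := ε - S.toReal with hδ₁def
  set δ₂ : ℝ := x₀ - C.toReal with hδ₂def
  have hδ₁ : 0 < δ₁ := by simp [hδ₁def]; linarith
  have hδ₂ : 0 < δ₂ := by simp [hδ₂def]; linarith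
  set c : ℝ := min c₀ (min (δ₁ / (K + 1)) (δ₂ / (J + 1))) with hcdef
  have hcpos : 0 < c := by
    apply lt_min hc₀ (lt_min (div_pos hδ₁ (by linarith)) (div_pos hδ₂ (by linarith)))
  have hcle : c ≤ c₀ := min_le_left _ _
  have hcK : c * K ≤ δ₁ :=
    aux_mul hδ₁ hK0 ((min_le_right _ _).trans (min_le_left _ _))
  have hcJ : c * J ≤ δ₂ :=
    aux_mul hδ₂ hAI.le ((min_le_right _ _).trans (min_le_right _ _))
  refine ⟨c, ⟨hcpos, hcle⟩, ?_, ?_, ?_⟩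
  · -- Bregman constraint
    have key1 : ∀ t ∈ Set.Ioo (0:ℝ) 1,
        ENNReal.ofReal (bregmanD φ φ' (F t + c) (Fb t))
          ≤ ENNReal.ofReal (c * G t) + ENNReal.ofReal (bregmanD φ φ' (F t) (Fb t)) := by
      intro t ht
      have hup := shift_upper hφconv hφderiv (hF0 t ht) hcpos hcle
      have habs : φ' (F t + c₀) - φ' (Fb t) ≤ G t := by
        have := le_abs_self (φ' (F t + c₀)); have := neg_abs_le (φ' (Fb t))
        simp only [hGdef]; linarith
      have hm : c * (φ' (F t + c₀) - φ' (Fb t)) ≤ c * G t :=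
        mul_le_mul_of_nonneg_left habs hcpos.le
      rw [mul_sub] at hm
      have h1 : bregmanD φ φ' (F t + c) (Fb t)
          ≤ c * G t + bregmanD φ φ' (F t) (Fb t) := by
        have expand : bregmanD φ φ' (F t + c) (Fb t)
            = bregmanD φ φ' (F t) (Fb t) + (φ (F t + c) - φ (F t) - c * φ' (Fb t)) := by
          simp only [bregmanD]; ring
        rw [expand]; linarith
      calc ENNReal.ofReal (bregmanD φ φ' (F t + c) (Fb t))
          ≤ ENNReal.ofReal (c * G t + bregmanD φ φ' (F t) (Fb t)) :=
            ENNReal.ofReal_le_ofReal h1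
        _ ≤ _ := ENNReal.ofReal_add_le
    have hGa : AEMeasurable (fun t => ENNReal.ofReal (c * G t))
        (volume.restrict (Set.Ioo (0:ℝ) 1)) :=
      ENNReal.measurable_ofReal.comp_aemeasurable (hG.aemeasurable.const_mul c)
    have hcg : ∫⁻ t in Set.Ioo (0:ℝ) 1, ENNReal.ofReal (c * G t)
        = ENNReal.ofReal (c * K) := by
      rw [← ofReal_integral_eq_lintegral_ofReal (hG.const_mul c)
        (ae_of_all _ fun t => mul_nonneg hcpos.le (hG0 t)), integral_const_mul]
    calc ∫⁻ t in Set.Ioo (0:ℝ) 1, ENNReal.ofReal (bregmanD φ φ' (F t + c) (Fb t))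
        ≤ ∫⁻ t in Set.Ioo (0:ℝ) 1,
            (ENNReal.ofReal (c * G t) + ENNReal.ofReal (bregmanD φ φ' (F t) (Fb t))) :=
          lintegral_mono_ae ((ae_restrict_iff' hIm).2 (ae_of_all _ key1))
      _ = (∫⁻ t in Set.Ioo (0:ℝ) 1, ENNReal.ofReal (c * G t)) + S :=
          lintegral_add_left' hGa _
      _ = ENNReal.ofReal (c * K) + ENNReal.ofReal S.toReal := by
          rw [hcg, ENNReal.ofReal_toReal hS_ne]
      _ = ENNReal.ofReal (c * K + S.toReal) :=
          (ENNReal.ofReal_add (mul_nonneg hcpos.le hK0) ENNReal.toReal_nonneg).symm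
      _ ≤ ENNReal.ofReal ε := ENNReal.ofReal_le_ofReal (by simp only [hδ₁def] at hcK; linarith)
  · -- budget constraint
    have key2 : ∀ t ∈ Set.Ioo (0:ℝ) 1,
        ENNReal.ofReal ((F t + c) * A t)
          ≤ ENNReal.ofReal (c * A t) + ENNReal.ofReal (F t * A t) := by
      intro t ht
      rw [show (F t + c) * A t = c * A t + F t * A t by ring]
      exact ENNReal.ofReal_add_le
    have hAa : AEMeasurable (fun t => ENNReal.ofReal (c * A t))
        (volume.restrict (Set.Ioo (0:ℝ) 1)) :=
      ENNReal.measurable_ofReal.comp_aemeasurable (hAint.aemeasurable.const_mul c)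
    have hca : ∫⁻ t in Set.Ioo (0:ℝ) 1, ENNReal.ofReal (c * A t)
        = ENNReal.ofReal (c * J) := by
      rw [← ofReal_integral_eq_lintegral_ofReal (hAint.const_mul c)
        ((ae_restrict_iff' hIm).2 (ae_of_all _ fun t ht =>
          mul_nonneg hcpos.le (hApos t ht).le)), integral_const_mul]
    calc ∫⁻ t in Set.Ioo (0:ℝ) 1, ENNReal.ofReal ((F t + c) * A t)
        ≤ ∫⁻ t in Set.Ioo (0:ℝ) 1,
            (ENNReal.ofReal (c * A t) + ENNReal.ofReal (F t * A t)) :=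
          lintegral_mono_ae ((ae_restrict_iff' hIm).2 (ae_of_all _ key2))
      _ = (∫⁻ t in Set.Ioo (0:ℝ) 1, ENNReal.ofReal (c * A t)) + C :=
          lintegral_add_left' hAa _
      _ = ENNReal.ofReal (c * J) + ENNReal.ofReal C.toReal := by
          rw [hca, ENNReal.ofReal_toReal hC_ne]
      _ = ENNReal.ofReal (c * J + C.toReal) :=
          (ENNReal.ofReal_add (mul_nonneg hcpos.le hAI.le) ENNReal.toReal_nonneg).symm
      _ ≤ ENNReal.ofReal x₀ := ENNReal.ofReal_le_ofReal (by simp only [hδ₂def] at hcJ; linarith)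
  · -- utility strictly increases
    have hInt0 : IntegrableOn (fun t => u (F t)) (Set.Ioo 0 1) := by
      have := hintu 0 ⟨le_rfl, hc₀.le⟩
      simpa using this
    have hIntc : IntegrableOn (fun t => u (F t + c)) (Set.Ioo 0 1) :=
      hintu c ⟨hcpos.le, hcle⟩
    have hposf : ∀ t ∈ Set.Ioo (0:ℝ) 1, 0 < u (F t + c) - u (F t) := by
      intro t ht
      have h0 : (0:ℝ) ≤ F t := hF0 t ht
      have := hu h0 (show F t + c ∈ Set.Ici (0:ℝ) by simp; linarith)
        (by linarith)
      linarith
    have hfi : Integrable (fun t => u (F t + c) - u (F t))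
        (volume.restrict (Set.Ioo (0:ℝ) 1)) := hIntc.sub hInt0
    have hnn : 0 ≤ᵐ[volume.restrict (Set.Ioo (0:ℝ) 1)]
        fun t => u (F t + c) - u (F t) :=
      (ae_restrict_iff' hIm).2 (ae_of_all _ fun t ht => (hposf t ht).le)
    have hpos_int : 0 < ∫ t in Set.Ioo (0:ℝ) 1, (u (F t + c) - u (F t)) := by
      rw [integral_pos_iff_support_of_nonneg_ae hnn hfi]
      have hsub : Set.Ioo (0:ℝ) 1 ⊆ Function.support fun t => u (F t + c) - u (F t) :=
        fun t ht => ne_of_gt (hposf t ht)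
      refine lt_of_lt_of_le ?_ (measure_mono hsub)
      rw [Measure.restrict_apply_self]
      simp [Real.volume_Ioo]
    rw [integral_sub hIntc hInt0] at hpos_int
    linarith
end
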